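/- arXiv:2008.12826 — 4 statements merged into one kernel-verified Lean document; each statement's English description precedes it below -/
import Mathlib

section
/- There do not exist F, M ∈ Λ with F + M = C, F·M = 1, F² ≥ 1 and M² ≥ 1. -/
namespace CubicSurfaceLattice

/-- The Minkowski bilinear form of signature `(1,6)` on `Λ = ℤ⁷`. -/
def B (u v : Fin 7 → ℤ) : ℤ := u 0 * v 0 - ∑ i : Fin 6, u i.succ * v i.succ

/-- The canonical class `K = -3e₀ + e₁ + ⋯ + e₆` of the cubic surface. -/
def K : Fin 7 → ℤ := fun i => if i = 0 then -3 else 1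

/-- The curve class `C = 13e₀ - 5(e₁ + ⋯ + e₆)`. -/
def C : Fin 7 → ℤ := fun i => if i = 0 then 13 else -5

/-- There is no decomposition C = F + M with F·M = 1, F² ≥ 1 and M² ≥ 1. -/
theorem no_splitting_both_positive :
    ¬ ∃ F M : Fin 7 → ℤ, F + M = C ∧ B F M = 1 ∧ 1 ≤ B F F ∧ 1 ≤ B M M := by
  rintro ⟨F, M, hsum, hFM, hF, hM⟩
  set a := F 0 with ha
  set b := M 0 with hb
  set P := ∑ i : Fin 6, F i.succ ^ 2 with hPdef
  set Q := ∑ i : Fin 6, M i.succ ^ 2 with hQdef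
  set S := ∑ i : Fin 6, F i.succ * M i.succ with hSdef
  have hcomp : ∀ i : Fin 7, F i + M i = C i := fun i => congrFun hsum i
  have h1 : a + b = 13 := by simpa [C] using hcomp 0
  have hsucc : ∀ i : Fin 6, M i.succ = -5 - F i.succ := by
    intro i
    have := hcomp i.succ
    simp [C, Fin.succ_ne_zero] at this
    linarith
  have h2 : P + 2*S + Q = 150 := by
    have key : ∑ i : Fin 6, (F i.succ ^ 2 + 2 * (F i.succ * M i.succ) + M i.succ ^ 2) = 150 := by
      have h25 : ∀ i : Fin 6, F i.succ ^ 2 + 2 * (F i.succ * M i.succ) + M i.succ ^ 2 = 25 := by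
        intro i; rw [hsucc i]; ring
      simp [h25]
    rw [hPdef, hQdef, hSdef, Finset.mul_sum, ← Finset.sum_add_distrib, ← Finset.sum_add_distrib]
    exact key
  have hP : 0 ≤ P := Finset.sum_nonneg fun i _ => sq_nonneg _
  have hQ : 0 ≤ Q := Finset.sum_nonneg fun i _ => sq_nonneg _
  have h6 : S^2 ≤ P*Q := Finset.sum_mul_sq_le_sq_mul_sq Finset.univ _ _
  have h3 : a*b - S = 1 := hFM
  have hPP : ∑ i : Fin 6, F i.succ * F i.succ = P := by
    rw [hPdef]; exact Finset.sum_congr rfl fun i _ => (sq (F i.succ)).symm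
  have hQQ : ∑ i : Fin 6, M i.succ * M i.succ = Q := by
    rw [hQdef]; exact Finset.sum_congr rfl fun i _ => (sq (M i.succ)).symm
  simp only [B, hPP, hQQ] at hF hM
  have h4 : 1 ≤ a^2 - P := by rw [sq]; exact hF
  have h5 : 1 ≤ b^2 - Q := by rw [sq]; exact hM
  have h6' : 0 ≤ P*Q - S^2 := by linarith
  have hPQ : 68 ≤ P + Q := by nlinarith [sq_nonneg (a-b)]
  have key : 0 ≤ a^2*Q - 2*a*b*S + b^2*P := by
    nlinarith [sq_nonneg (a*Q - b*S), sq_nonneg (b*P - a*S),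
      mul_nonneg (sq_nonneg a) h6', mul_nonneg (sq_nonneg b) h6']
  have key2 : (a^2-P)*(b^2-Q) ≤ (a*b - S)^2 := by
    nlinarith [sq_nonneg (a*S - b*P), mul_nonneg (by linarith : (0:ℤ) ≤ a^2-P) key]
  nlinarith [key2, mul_pos (by linarith : (0:ℤ) < a^2-P) (by linarith : (0:ℤ) < b^2-Q)]

end CubicSurfaceLattice
end

section
/- There do not exist F, M ∈ Λ with F + M = C, F·M = 1, F·K ≤ −1, M·K ≤ −1, F² + F·K ≥ 0 and M² + M·K ≥ 0. (The last four conditions say that both summands have the numerical invariants of curves of positive degree and geometric genus at least 1 on the cubic surface.) -/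
namespace CubicSurfaceLattice

set_option maxHeartbeats 1000000 in
/-- There is no decomposition C = F + M with F·M = 1 where both summands have the
numerical invariants of curves of positive degree and geometric genus at least 1. -/
theorem no_splitting_positive_genus :
    ¬ ∃ F M : Fin 7 → ℤ, F + M = C ∧ B F M = 1 ∧
      B F K ≤ -1 ∧ B M K ≤ -1 ∧ 0 ≤ B F F + B F K ∧ 0 ≤ B M M + B M K := by
  rintro ⟨F, M, hFM, h1, h2, h3, h4, h5⟩
  have hM : ∀ i, M i = C i - F i := fun i => by
    have := congrFun hFM i; simp only [Pi.add_apply] at this; linarith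
  simp only [B, K, C, Fin.sum_univ_six, hM] at h1 h2 h3 h4 h5
  norm_num [Fin.succ, Fin.ext_iff] at h1 h2 h3 h4 h5
  have e2 : (⟨2, by omega⟩ : Fin 7) = 2 := rfl
  have e3 : (⟨3, by omega⟩ : Fin 7) = 3 := rfl
  have e4 : (⟨4, by omega⟩ : Fin 7) = 4 := rfl
  have e5 : (⟨5, by omega⟩ : Fin 7) = 5 := rfl
  have e6 : (⟨6, by omega⟩ : Fin 7) = 6 := rfl
  simp only [e2, e3, e4, e5, e6] at h1 h2 h3 h4 h5
  clear hFM hM e2 e3 e4 e5 e6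
  set a := F 0 with ha
  set b1 := F 1 with hb1
  set b2 := F 2 with hb2
  set b3 := F 3 with hb3
  set b4 := F 4 with hb4
  set b5 := F 5 with hb5
  set b6 := F 6 with hb6
  set s : ℤ := b1 + b2 + b3 + b4 + b5 + b6 with hs
  set q : ℤ := b1*b1 + b2*b2 + b3*b3 + b4*b4 + b5*b5 + b6*b6 with hqdef
  -- Cauchy–Schwarz on the six coordinates
  have hCS : s^2 ≤ 6*q := by
    rw [hs, hqdef]
    linarith [sq_nonneg (b1-b2), sq_nonneg (b1-b3), sq_nonneg (b1-b4), sq_nonneg (b1-b5),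
      sq_nonneg (b1-b6), sq_nonneg (b2-b3), sq_nonneg (b2-b4), sq_nonneg (b2-b5),
      sq_nonneg (b2-b6), sq_nonneg (b3-b4), sq_nonneg (b3-b5), sq_nonneg (b3-b6),
      sq_nonneg (b4-b5), sq_nonneg (b4-b6), sq_nonneg (b5-b6), sq_nonneg (b1+b2+b3+b4+b5+b6)]
  -- translate the hypotheses into a, s, q
  have hq : q = 1 - 13*a + a*a - 5*s := by rw [hqdef, hs]; linarith [h1]
  have h4' : 0 ≤ 10*a + 4*s - 1 := by
    have : 0 ≤ a*a - q - 3*a - s := by rw [hqdef, hs]; linarith [h4]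
    linarith [hq]
  have h5' : 10*a + 4*s ≤ 9 := by
    have : 0 ≤ a*a - 23*a + 10 - 9*s - q := by rw [hqdef, hs]; linarith [h5]
    linarith [hq]
  have hu1 : 1 ≤ 5*a + 2*s := by omega
  have hu2 : 5*a + 2*s ≤ 4 := by omega
  have hprod : 0 ≤ (5*a + 2*s - 1) * (4 - (5*a + 2*s)) :=
    mul_nonneg (by linarith) (by linarith)
  nlinarith [hCS, hq, sq_nonneg (12*a + 5*s - 3), hprod]

end CubicSurfaceLattice
end

section
/- For every F ∈ Λ with F² = −1 and F·K = −1, one has F·(C − F) ≠ 1. -/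
namespace CubicSurfaceLattice

/-- No line class F (F² = -1, F·K = -1) satisfies F·(C - F) = 1. -/
theorem no_line_splitting :
    ∀ F : Fin 7 → ℤ, B F F = -1 → B F K = -1 → B F (C - F) ≠ 1 := by
  intro F h1 h2 h3
  have e : B F (C - F) = B F C - B F F := by
    simp [B, Fin.sum_univ_six, Pi.sub_apply]; ring
  rw [e, h1] at h3
  simp [B, C, K, Fin.sum_univ_six] at h2 h3
  omega

end CubicSurfaceLattice
end

section
/- For every F ∈ Λ, the integer F·(C − F) is even. In particular, there is no decomposition C = F + M in Λ with F·M = 1. -/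
namespace CubicSurfaceLattice

lemma even_mul_sub_self {c : ℤ} (hc : Odd c) (a : ℤ) : Even (a * (c - a)) := by
  rcases Int.even_or_odd a with ha | ha
  · exact ha.mul_right _
  · exact ((hc.sub_odd ha)).mul_left _

/-- F·(C - F) is even for every F ∈ Λ; in particular there is no decomposition
C = F + M with F·M = 1. -/
theorem intersection_with_complement_even :
    (∀ F : Fin 7 → ℤ, Even (B F (C - F))) ∧
      ¬ ∃ F M : Fin 7 → ℤ, F + M = C ∧ B F M = 1 := by
  have main : ∀ F : Fin 7 → ℤ, Even (B F (C - F)) := by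
    intro F
    have h0 : Even (F 0 * ((C - F) 0)) := by
      simpa [C] using even_mul_sub_self (c := 13) ⟨6, by ring⟩ (F 0)
    have hs : Even (∑ i : Fin 6, F i.succ * (C - F) i.succ) := by
      refine Finset.even_sum _ (fun i _ => ?_)
      have : (Fin.succ i : Fin 7) ≠ 0 := Fin.succ_ne_zero i
      simpa [C, this] using even_mul_sub_self (c := -5) ⟨-3, by ring⟩ (F i.succ)
    exact h0.sub hs
  refine ⟨main, ?_⟩
  rintro ⟨F, M, hFM, h1⟩
  have hM : M = C - F := by rw [← hFM]; ring
  rw [hM] at h1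
  obtain ⟨k, hk⟩ := main F
  omega
end CubicSurfaceLattice
end
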